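/- Let a > 1 and let q be an odd positive integer. The sequence of functions Z_n : ℝ^d → ℂ defined by Z_n(x) = Σ_{k=0}^{n} C_k(n,a) · exp((p·x)·(−i)^q·(1 − 2k/n)^q/ħ) converges pointwise on ℝ^d to Z(x) = exp((p·x)·(−i·a)^q/ħ) as n → ∞, and the convergence is uniform on every compact subset of ℝ^d. -/

import Mathlib

open scoped RealInnerProductSpace
open Finset Filter



def SOmult {j n : ℕ} (f : Fin j → Fin n) (i : Fin n) : ℕ :=
  (Finset.univ.filter (fun l => f l = i)).card

theorem SO_key_identity (a : ℝ) (n j : ℕ) :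
    ∑ k ∈ Finset.range (n+1),
        (n.choose k : ℝ) * ((1+a)/2)^(n-k) * ((1-a)/2)^k * ((n:ℝ) - 2*k)^j
      = ∑ f : Fin j → Fin n, ∏ i : Fin n,
          ((1+a)/2 + (1-a)/2 * (-1 : ℝ)^(SOmult f i)) := by
  classical
  set α : ℝ := (1+a)/2 with hα
  set β : ℝ := (1-a)/2 with hβ
  -- Step B : LHS = sum over subsets
  have hB : ∑ k ∈ Finset.range (n+1),
      (n.choose k : ℝ) * α^(n-k) * β^k * ((n:ℝ) - 2*k)^j
      = ∑ t : Finset (Fin n), α^((tᶜ).card) * β^(t.card) * ((n:ℝ) - 2*(t.card : ℝ))^j := by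
    rw [← Finset.powerset_univ, Finset.sum_powerset]
    simp only [Finset.card_univ, Fintype.card_fin]
    refine Finset.sum_congr rfl fun k hk => ?_
    have : ∀ t ∈ Finset.powersetCard k (Finset.univ : Finset (Fin n)),
        α^((tᶜ).card) * β^(t.card) * ((n:ℝ) - 2*(t.card : ℝ))^j
        = α^(n-k) * β^k * ((n:ℝ) - 2*(k : ℝ))^j := by
      intro t ht
      have htc : t.card = k := (Finset.mem_powersetCard.1 ht).2
      rw [Finset.card_compl, htc, Fintype.card_fin]
    rw [Finset.sum_congr rfl this, Finset.sum_const, Finset.card_powersetCard,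
      Finset.card_univ, Fintype.card_fin, nsmul_eq_mul]
    ring
  rw [hB]
  -- Step C : expand the power as a sum over functions
  have hC : ∀ t : Finset (Fin n),
      ((n:ℝ) - 2*(t.card:ℝ))^j = ∑ f : Fin j → Fin n, ∏ i : Fin n,
        (if i ∈ t then (-1:ℝ) else 1)^(SOmult f i) := by
    intro t
    have hsum : ((n:ℝ) - 2*(t.card:ℝ)) = ∑ i : Fin n, (if i ∈ t then (-1:ℝ) else 1) := by
      have h1 : ∀ i : Fin n, (if i ∈ t then (-1:ℝ) else 1)
          = 1 - 2 * (if i ∈ t then (1:ℝ) else 0) := by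
        intro i; split <;> norm_num
      rw [Finset.sum_congr rfl fun i _ => h1 i]
      rw [Finset.sum_sub_distrib, ← Finset.mul_sum, Finset.sum_ite_mem, Finset.univ_inter,
        Finset.sum_const, Finset.sum_const, Finset.card_univ, Fintype.card_fin]
      simp
    rw [hsum, Fintype.sum_pow]
    refine Finset.sum_congr rfl fun f _ => ?_
    rw [← Finset.prod_fiberwise_of_maps_to (fun l _ => Finset.mem_univ (f l))
      (fun l => if f l ∈ t then (-1:ℝ) else 1)]
    refine Finset.prod_congr rfl fun i _ => ?_
    have : ∀ l ∈ Finset.univ.filter (fun l => f l = i),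
        (if f l ∈ t then (-1:ℝ) else 1) = (if i ∈ t then (-1:ℝ) else 1) := by
      intro l hl
      rw [(Finset.mem_filter.1 hl).2]
    rw [Finset.prod_congr rfl this, Finset.prod_const]
    rfl
  rw [Finset.sum_congr rfl fun t _ => by rw [hC t]]
  -- swap sums
  simp only [Finset.mul_sum]
  rw [Finset.sum_comm]
  refine Finset.sum_congr rfl fun f _ => ?_
  -- for fixed f : sum over subsets of products = product of sums
  have key := Fintype.prod_add (fun i : Fin n => β * (-1:ℝ)^(SOmult f i)) (fun _ : Fin n => α)
  have : ∀ i : Fin n, α + β * (-1:ℝ)^(SOmult f i) = β * (-1:ℝ)^(SOmult f i) + α := by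
    intro i; ring
  rw [Finset.prod_congr rfl fun i _ => this i, key]
  refine Finset.sum_congr rfl fun t _ => ?_
  rw [Finset.prod_mul_distrib, Finset.prod_const, Finset.prod_const]
  have hsplit : ∏ i : Fin n, (if i ∈ t then (-1:ℝ) else 1)^(SOmult f i)
      = ∏ i ∈ t, (-1:ℝ)^(SOmult f i) := by
    rw [← Finset.prod_filter_mul_prod_filter_not Finset.univ (fun i => i ∈ t)]
    have h2 : ∀ i ∈ Finset.univ.filter (fun i => i ∈ t),
        (if i ∈ t then (-1:ℝ) else 1)^(SOmult f i) = (-1:ℝ)^(SOmult f i) := by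
      intro i hi; rw [if_pos (Finset.mem_filter.1 hi).2]
    have h3 : ∀ i ∈ Finset.univ.filter (fun i => ¬ i ∈ t),
        (if i ∈ t then (-1:ℝ) else 1)^(SOmult f i) = 1 := by
      intro i hi; rw [if_neg (Finset.mem_filter.1 hi).2]; exact one_pow _
    rw [Finset.prod_congr rfl h2, Finset.prod_congr rfl h3, Finset.prod_const_one, mul_one]
    congr 1
    ext i; simp
  rw [hsplit]
  ring



theorem SOmult_eq_zero {j n : ℕ} (f : Fin j → Fin n) (i : Fin n)
    (h : i ∉ Finset.univ.image f) : SOmult f i = 0 := by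
  rw [SOmult, Finset.card_eq_zero, Finset.filter_eq_empty_iff]
  intro l _
  intro hfl
  exact h (Finset.mem_image.2 ⟨l, Finset.mem_univ l, hfl⟩)

theorem SOfactor_eq {a : ℝ} {m : ℕ} :
    (1+a)/2 + (1-a)/2 * (-1:ℝ)^m = if Even m then 1 else a := by
  rcases Nat.even_or_odd m with h | h
  · rw [h.neg_one_pow, if_pos h]; ring
  · rw [h.neg_one_pow, if_neg (Nat.not_even_iff_odd.2 h)]; ring

-- bounds on the product
theorem SOprod_le {a : ℝ} (ha : 1 ≤ a) {j n : ℕ} (f : Fin j → Fin n) :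
    ∏ i : Fin n, ((1+a)/2 + (1-a)/2 * (-1 : ℝ)^(SOmult f i)) ≤ a^j := by
  classical
  calc ∏ i : Fin n, ((1+a)/2 + (1-a)/2 * (-1 : ℝ)^(SOmult f i))
      ≤ ∏ i : Fin n, (if i ∈ Finset.univ.image f then a else 1) := by
        refine Finset.prod_le_prod (fun i _ => ?_) (fun i _ => ?_)
        · rw [SOfactor_eq]; split
          · norm_num
          · linarith
        · rw [SOfactor_eq]
          by_cases hi : i ∈ Finset.univ.image f
          · rw [if_pos hi]; split
            · linarith
            · exact le_refl a
          · rw [if_neg hi, SOmult_eq_zero f i hi, if_pos Even.zero]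
    _ = a ^ (Finset.univ.image f).card := by
        rw [Finset.prod_ite_mem, Finset.univ_inter, Finset.prod_const]
    _ ≤ a^j := by
        apply pow_le_pow_right₀ ha
        calc (Finset.univ.image f).card ≤ (Finset.univ : Finset (Fin j)).card :=
          Finset.card_image_le
        _ = j := by simp

theorem SOprod_ge {a : ℝ} (ha : 1 ≤ a) {j n : ℕ} (f : Fin j → Fin n) :
    (1:ℝ) ≤ ∏ i : Fin n, ((1+a)/2 + (1-a)/2 * (-1 : ℝ)^(SOmult f i)) := by
  have := Finset.prod_le_prod (s := (Finset.univ : Finset (Fin n)))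
    (f := fun _ => (1:ℝ))
    (g := fun i => (1+a)/2 + (1-a)/2 * (-1 : ℝ)^(SOmult f i))
    (fun i _ => zero_le_one)
    (fun i _ => by
      rw [SOfactor_eq]
      split
      · exact le_refl 1
      · exact ha)
  simpa using this

theorem SOprod_inj {a : ℝ} {j n : ℕ} (f : Fin j → Fin n) (hf : Function.Injective f) :
    ∏ i : Fin n, ((1+a)/2 + (1-a)/2 * (-1 : ℝ)^(SOmult f i)) = a^j := by
  classical
  have hm : ∀ i : Fin n, ((1+a)/2 + (1-a)/2 * (-1 : ℝ)^(SOmult f i))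
      = if i ∈ Finset.univ.image f then a else 1 := by
    intro i
    by_cases hi : i ∈ Finset.univ.image f
    · obtain ⟨l, _, hl⟩ := Finset.mem_image.1 hi
      have : SOmult f i = 1 := by
        rw [SOmult, Finset.card_eq_one]
        refine ⟨l, ?_⟩
        ext l'
        simp only [Finset.mem_filter, Finset.mem_univ, true_and, Finset.mem_singleton]
        constructor
        · intro h; exact hf (h.trans hl.symm)
        · intro h; rw [h, hl]
      rw [this, if_pos hi, SOfactor_eq, if_neg (by simp)]
    · rw [SOmult_eq_zero f i hi, if_neg hi, SOfactor_eq, if_pos Even.zero]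
  rw [Finset.prod_congr rfl fun i _ => hm i, Finset.prod_ite_mem, Finset.univ_inter,
    Finset.prod_const, Finset.card_image_of_injective _ hf]
  simp

theorem SOcard_inj (j n : ℕ) :
    (Finset.univ.filter (fun f : Fin j → Fin n => Function.Injective f)).card
      = n.descFactorial j := by
  classical
  rw [← Fintype.card_subtype]
  rw [Fintype.card_congr (Equiv.subtypeInjectiveEquivEmbedding (Fin j) (Fin n))]
  rw [Fintype.card_embedding_eq]
  simp



noncomputable def SOM (a : ℝ) (n j : ℕ) : ℝ :=
  ∑ k ∈ Finset.range (n+1),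
    (n.choose k : ℝ) * ((1+a)/2)^(n-k) * ((1-a)/2)^k * ((1:ℝ) - 2*k/n)^j



theorem SOM_bound {a : ℝ} (ha : 1 ≤ a) {n : ℕ} (hn : 1 ≤ n) (j : ℕ) :
    |SOM a n j - a^j| ≤ (1 - (n.descFactorial j : ℝ)/(n:ℝ)^j) * a^j := by
  classical
  have hn0 : (0:ℝ) < (n:ℝ) := by exact_mod_cast hn
  have hnj : (0:ℝ) < (n:ℝ)^j := pow_pos hn0 j
  -- SOM = T / n^j
  have hSOM : SOM a n j = (∑ f : Fin j → Fin n, ∏ i : Fin n,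
      ((1+a)/2 + (1-a)/2 * (-1 : ℝ)^(SOmult f i))) / (n:ℝ)^j := by
    rw [← SO_key_identity, SOM, Finset.sum_div]
    refine Finset.sum_congr rfl fun k _ => ?_
    have : (1:ℝ) - 2*(k:ℝ)/(n:ℝ) = ((n:ℝ) - 2*k) / n := by
      field_simp
    have h2 : ((1:ℝ) - 2*(k:ℝ)/(n:ℝ))^j = ((n:ℝ) - 2*(k:ℝ))^j / (n:ℝ)^j := by
      rw [this, div_pow]
    rw [h2]
    ring
  set T := ∑ f : Fin j → Fin n, ∏ i : Fin n,
      ((1+a)/2 + (1-a)/2 * (-1 : ℝ)^(SOmult f i)) with hT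
  -- |T - n^j * a^j| ≤ (n^j - descFactorial) * a^j
  have hTb : |T - (n:ℝ)^j * a^j| ≤ ((n:ℝ)^j - (n.descFactorial j : ℝ)) * a^j := by
    have hcard : ((Finset.univ : Finset (Fin j → Fin n)).card : ℝ) = (n:ℝ)^j := by
      simp [Finset.card_univ]
    have h1 : T - (n:ℝ)^j * a^j = ∑ f : Fin j → Fin n,
        ((∏ i : Fin n, ((1+a)/2 + (1-a)/2 * (-1 : ℝ)^(SOmult f i))) - a^j) := by
      rw [Finset.sum_sub_distrib, Finset.sum_const, ← hT, hcard.symm, nsmul_eq_mul]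
    rw [h1]
    calc |∑ f : Fin j → Fin n,
        ((∏ i : Fin n, ((1+a)/2 + (1-a)/2 * (-1 : ℝ)^(SOmult f i))) - a^j)|
        ≤ ∑ f : Fin j → Fin n,
          |(∏ i : Fin n, ((1+a)/2 + (1-a)/2 * (-1 : ℝ)^(SOmult f i))) - a^j| :=
        Finset.abs_sum_le_sum_abs _ _
      _ ≤ ∑ f ∈ Finset.univ.filter (fun f : Fin j → Fin n => ¬ Function.Injective f),
            a^j := by
          rw [← Finset.sum_filter_add_sum_filter_not Finset.univ
            (fun f : Fin j → Fin n => Function.Injective f)]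
          have hz : ∀ f ∈ Finset.univ.filter
              (fun f : Fin j → Fin n => Function.Injective f),
              |(∏ i : Fin n, ((1+a)/2 + (1-a)/2 * (-1 : ℝ)^(SOmult f i))) - a^j| = 0 := by
            intro f hf
            rw [SOprod_inj f (Finset.mem_filter.1 hf).2, sub_self, abs_zero]
          rw [Finset.sum_congr rfl hz, Finset.sum_const_zero, zero_add]
          refine Finset.sum_le_sum fun f _ => ?_
          rw [abs_sub_comm, abs_of_nonneg (by linarith [SOprod_le ha f])]
          linarith [SOprod_ge ha f]
      _ = ((n:ℝ)^j - (n.descFactorial j : ℝ)) * a^j := by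
          rw [Finset.sum_const, nsmul_eq_mul]
          congr 1
          rw [Finset.filter_not, Finset.card_sdiff_of_subset (Finset.filter_subset _ _), SOcard_inj]
          have hcu : (Finset.univ : Finset (Fin j → Fin n)).card = n^j := by
            simp [Finset.card_univ]
          rw [hcu, Nat.cast_sub (Nat.descFactorial_le_pow n j)]
          push_cast
          ring
  rw [hSOM]
  have : T / (n:ℝ)^j - a^j = (T - (n:ℝ)^j * a^j) / (n:ℝ)^j := by field_simp
  rw [this, abs_div, abs_of_pos hnj, div_le_iff₀ hnj]
  calc |T - (n:ℝ)^j * a^j| ≤ ((n:ℝ)^j - (n.descFactorial j : ℝ)) * a^j := hTb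
    _ = (1 - (n.descFactorial j : ℝ)/(n:ℝ)^j) * a^j * (n:ℝ)^j := by
          field_simp




theorem SOM_abs_le {a : ℝ} (ha : 1 ≤ a) {n : ℕ} (hn : 1 ≤ n) (j : ℕ) :
    |SOM a n j - a^j| ≤ a^j := by
  refine (SOM_bound ha hn j).trans ?_
  have h1 : (0:ℝ) ≤ (n.descFactorial j : ℝ)/(n:ℝ)^j := by positivity
  have h2 : (0:ℝ) ≤ a^j := by positivity
  nlinarith

theorem SOM_ratio_tendsto (j : ℕ) :
    Tendsto (fun n : ℕ => 1 - (n.descFactorial j : ℝ)/(n:ℝ)^j) atTop (nhds 0) := by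
  have key : Tendsto (fun n : ℕ => (n.descFactorial j : ℝ)/(n:ℝ)^j) atTop (nhds 1) := by
    have hlow : Tendsto (fun n : ℕ => ((1:ℝ) - j/n)^j) atTop (nhds 1) := by
      have : Tendsto (fun n : ℕ => (1:ℝ) - j/n) atTop (nhds 1) := by
        have := (tendsto_const_div_atTop_nhds_zero_nat (j:ℝ))
        have h := tendsto_const_nhds (x := (1:ℝ)) (f := atTop (α := ℕ)) |>.sub this
        simpa using h
      have := this.pow j
      simpa using this
    refine tendsto_of_tendsto_of_tendsto_of_le_of_le' hlow tendsto_const_nhds ?_ ?_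
    · filter_upwards [eventually_ge_atTop (j+1)] with n hn
      have hnj : j ≤ n := by omega
      have hn0 : (0:ℝ) < (n:ℝ) := by
        have : 0 < n := by omega
        exact_mod_cast this
      have e1 : (1:ℝ) - (j:ℝ)/n = ((n:ℝ)-j)/n := by field_simp
      rw [e1, div_pow]
      have hnum : ((n:ℝ)-(j:ℝ))^j ≤ (n.descFactorial j : ℝ) := by
        have hnat : (n-j)^j ≤ n.descFactorial j :=
          le_trans (Nat.pow_le_pow_left (by omega) j) (Nat.pow_sub_le_descFactorial n j)
        calc ((n:ℝ)-(j:ℝ))^j = (((n-j : ℕ)):ℝ)^j := by rw [Nat.cast_sub hnj]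
          _ ≤ _ := by exact_mod_cast hnat
      have hd : (0:ℝ) < (n:ℝ)^j := by positivity
      exact div_le_div_of_nonneg_right hnum hd.le |>.trans_eq rfl
    · filter_upwards [eventually_ge_atTop 1] with n hn
      have hn0 : (0:ℝ) < (n:ℝ)^j := by positivity
      rw [div_le_one hn0]
      exact_mod_cast Nat.descFactorial_le_pow n j
  have := tendsto_const_nhds (x := (1:ℝ)) (f := atTop (α := ℕ)) |>.sub key
  simpa using this




theorem cexp_tsum (w : ℂ) : Complex.exp w = ∑' m : ℕ, w^m / (m.factorial : ℂ) := by
  rw [Complex.exp_eq_exp_ℂ, NormedSpace.exp_eq_tsum_div]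

theorem SO_norm_bound {a : ℝ} (ha : 1 ≤ a) (q : ℕ) {n : ℕ} (hn : 1 ≤ n)
    (z : ℂ) (R : ℝ) (hz : ‖z‖ ≤ R) :
    ‖(∑ k ∈ Finset.range (n+1),
        ((n.choose k : ℂ) * (((1 + a) / 2 : ℝ) : ℂ) ^ (n - k)
            * (((1 - a) / 2 : ℝ) : ℂ) ^ k)
          * Complex.exp (z * (1 - 2 * (k : ℂ) / (n : ℂ)) ^ q))
      - Complex.exp (z * (a:ℂ)^q)‖
    ≤ ∑' m : ℕ, R^m / (m.factorial : ℝ) * |SOM a n (q*m) - a^(q*m)| := by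
  have hR : 0 ≤ R := le_trans (norm_nonneg z) hz
  have ha0 : (0:ℝ) < a := lt_of_lt_of_le one_pos ha
  set C : ℕ → ℂ := fun k => (n.choose k : ℂ) * (((1 + a) / 2 : ℝ) : ℂ) ^ (n - k)
      * (((1 - a) / 2 : ℝ) : ℂ) ^ k with hC
  set s : ℕ → ℝ := fun k => (1:ℝ) - 2*k/n with hs
  have hcast : ∀ k : ℕ, ((1:ℂ) - 2 * (k : ℂ) / (n : ℂ)) = ((s k : ℝ) : ℂ) := by
    intro k; rw [hs]; push_cast; ring
  have hsum1 : ∀ k : ℕ, Summable (fun m : ℕ => C k * (z * ((s k : ℝ):ℂ)^q)^m / (m.factorial : ℂ)) := by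
    intro k
    have := (NormedSpace.expSeries_div_summable (z * ((s k : ℝ):ℂ)^q)).mul_left (C k)
    refine this.congr fun m => ?_
    rw [mul_div_assoc]
  have hLHS : ∑ k ∈ Finset.range (n+1), C k * Complex.exp (z * (1 - 2 * (k : ℂ) / (n : ℂ)) ^ q)
      = ∑' m : ℕ, ∑ k ∈ Finset.range (n+1),
          C k * (z * ((s k : ℝ):ℂ)^q)^m / (m.factorial : ℂ) := by
    rw [Summable.tsum_finsetSum (fun k _ => hsum1 k)]
    refine Finset.sum_congr rfl fun k _ => ?_
    rw [hcast k, cexp_tsum, ← tsum_mul_left]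
    refine tsum_congr fun m => ?_
    rw [mul_div_assoc]
  -- inner sum = z^m * SOM / m!
  have hterm : ∀ m : ℕ, ∑ k ∈ Finset.range (n+1),
      C k * (z * ((s k : ℝ):ℂ)^q)^m / (m.factorial : ℂ)
      = z^m * ((SOM a n (q*m) : ℝ) : ℂ) / (m.factorial : ℂ) := by
    intro m
    have hMc : ((SOM a n (q*m) : ℝ) : ℂ)
        = ∑ k ∈ Finset.range (n+1), C k * ((s k : ℝ):ℂ)^(q*m) := by
      simp only [SOM, Complex.ofReal_sum, Complex.ofReal_mul, Complex.ofReal_pow,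
        Complex.ofReal_natCast, hC, hs]
    rw [hMc, Finset.mul_sum, Finset.sum_div]
    refine Finset.sum_congr rfl fun k _ => ?_
    rw [mul_pow, ← pow_mul]
    ring
  -- RHS exp as tsum
  have hRHS : Complex.exp (z * (a:ℂ)^q)
      = ∑' m : ℕ, z^m * (((a:ℝ)^(q*m) : ℝ) : ℂ) / (m.factorial : ℂ) := by
    rw [cexp_tsum]
    refine tsum_congr fun m => ?_
    rw [mul_pow, ← pow_mul]
    push_cast
    ring
  -- summability of the two series
  have habs : ∀ m : ℕ, |SOM a n (q*m)| ≤ 2 * a^(q*m) := by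
    intro m
    have h1 := SOM_abs_le ha hn (q*m)
    have h2 : |SOM a n (q*m)| ≤ |SOM a n (q*m) - a^(q*m)| + |a^(q*m)| := by
      calc |SOM a n (q*m)| = |(SOM a n (q*m) - a^(q*m)) + a^(q*m)| := by ring_nf
        _ ≤ _ := abs_add_le _ _
    rw [abs_of_pos (pow_pos ha0 _)] at h2
    linarith
  have hgsum : Summable (fun m : ℕ => R^m / (m.factorial : ℝ) * (2 * a^(q*m))) := by
    refine ((Real.summable_pow_div_factorial (R * a^q)).mul_left 2).congr fun m => ?_
    rw [pow_mul, mul_pow]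
    ring
  have hnorm1 : ∀ m : ℕ, ‖z^m * ((SOM a n (q*m) : ℝ) : ℂ) / (m.factorial : ℂ)‖
      ≤ R^m / (m.factorial : ℝ) * (2 * a^(q*m)) := by
    intro m
    rw [norm_div, norm_mul, norm_pow, Complex.norm_real, Complex.norm_natCast]
    have h1 : ‖z‖^m ≤ R^m := pow_le_pow_left₀ (norm_nonneg z) hz m
    have h2 : (0:ℝ) < m.factorial := by exact_mod_cast m.factorial_pos
    rw [div_le_iff₀ h2]
    calc ‖z‖^m * ‖(SOM a n (q*m) : ℝ)‖ ≤ R^m * (2 * a^(q*m)) := by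
          apply mul_le_mul h1 (by rw [Real.norm_eq_abs]; exact habs m) (norm_nonneg _)
            (by positivity)
      _ = R^m / (m.factorial : ℝ) * (2 * a^(q*m)) * m.factorial := by
          field_simp
  have hS1 : Summable (fun m : ℕ => z^m * ((SOM a n (q*m) : ℝ) : ℂ) / (m.factorial : ℂ)) :=
    Summable.of_norm_bounded hgsum hnorm1
  have hS2 : Summable (fun m : ℕ => z^m * (((a:ℝ)^(q*m) : ℝ) : ℂ) / (m.factorial : ℂ)) := by
    refine (NormedSpace.expSeries_div_summable (z * (a:ℂ)^q)).congr fun m => ?_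
    rw [mul_pow, ← pow_mul]
    push_cast
    ring
  -- the difference
  rw [hLHS, tsum_congr hterm, hRHS, ← Summable.tsum_sub hS1 hS2]
  have hdiff : ∀ m : ℕ, z^m * ((SOM a n (q*m) : ℝ) : ℂ) / (m.factorial : ℂ)
      - z^m * (((a:ℝ)^(q*m) : ℝ) : ℂ) / (m.factorial : ℂ)
      = z^m * (((SOM a n (q*m) - a^(q*m) : ℝ)) : ℂ) / (m.factorial : ℂ) := by
    intro m
    push_cast
    ring
  rw [tsum_congr hdiff]
  have hnorm2 : ∀ m : ℕ, ‖z^m * (((SOM a n (q*m) - a^(q*m) : ℝ)) : ℂ) / (m.factorial : ℂ)‖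
      ≤ R^m / (m.factorial : ℝ) * |SOM a n (q*m) - a^(q*m)| := by
    intro m
    rw [norm_div, norm_mul, norm_pow, Complex.norm_real, Complex.norm_natCast]
    have h2 : (0:ℝ) < m.factorial := by exact_mod_cast m.factorial_pos
    rw [div_le_iff₀ h2]
    have h1 : ‖z‖^m ≤ R^m := pow_le_pow_left₀ (norm_nonneg z) hz m
    calc ‖z‖^m * ‖(SOM a n (q*m) - a^(q*m) : ℝ)‖
        ≤ R^m * |SOM a n (q*m) - a^(q*m)| := by
          apply mul_le_mul h1 (le_of_eq (Real.norm_eq_abs _)) (norm_nonneg _) (by positivity)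
      _ = R^m / (m.factorial : ℝ) * |SOM a n (q*m) - a^(q*m)| * m.factorial := by
          field_simp
  have htsum_norm : Summable (fun m : ℕ => ‖z^m * (((SOM a n (q*m) - a^(q*m) : ℝ)) : ℂ) / (m.factorial : ℂ)‖) := by
    refine Summable.of_nonneg_of_le (fun m => norm_nonneg _) (fun m => (hnorm2 m).trans ?_) hgsum
    have := SOM_abs_le ha hn (q*m)
    have h0 : (0:ℝ) ≤ R^m / (m.factorial : ℝ) := by positivity
    have hle : |SOM a n (q*m) - a^(q*m)| ≤ 2 * a^(q*m) := by
      have : (0:ℝ) < a^(q*m) := pow_pos ha0 _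
      linarith
    exact mul_le_mul_of_nonneg_left hle h0
  refine (norm_tsum_le_tsum_norm htsum_norm).trans ?_
  refine Summable.tsum_le_tsum hnorm2 htsum_norm ?_
  refine Summable.of_nonneg_of_le (fun m => by positivity) (fun m => ?_) hgsum
  have h0 : (0:ℝ) ≤ R^m / (m.factorial : ℝ) := by positivity
  have ht := SOM_abs_le ha hn (q*m)
  have : (0:ℝ) < a^(q*m) := pow_pos ha0 _
  nlinarith




theorem SOM_tendsto {a : ℝ} (ha : 1 ≤ a) (j : ℕ) :
    Tendsto (fun n : ℕ => |SOM a n j - a^j|) atTop (nhds 0) := by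
  have hup : Tendsto (fun n : ℕ => (1 - (n.descFactorial j : ℝ)/(n:ℝ)^j) * a^j)
      atTop (nhds 0) := by
    have := (SOM_ratio_tendsto j).mul_const (a^j)
    simpa using this
  refine tendsto_of_tendsto_of_tendsto_of_le_of_le' tendsto_const_nhds hup ?_ ?_
  · exact Eventually.of_forall fun n => abs_nonneg _
  · filter_upwards [eventually_ge_atTop 1] with n hn
    exact SOM_bound ha hn j

theorem SO_D_tendsto {a : ℝ} (ha : 1 ≤ a) (q : ℕ) {R : ℝ} (hR : 0 ≤ R) :
    Tendsto (fun n : ℕ => ∑' m : ℕ, R^m / (m.factorial : ℝ) * |SOM a n (q*m) - a^(q*m)|)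
      atTop (nhds 0) := by
  have ha0 : (0:ℝ) < a := lt_of_lt_of_le one_pos ha
  have hgsum : Summable (fun m : ℕ => R^m / (m.factorial : ℝ) * a^(q*m)) := by
    refine (Real.summable_pow_div_factorial (R * a^q)).congr fun m => ?_
    rw [pow_mul, mul_pow]
    ring
  have h0 : (0:ℝ) = ∑' m : ℕ, (0:ℝ) := by simp
  rw [h0]
  refine tendsto_tsum_of_dominated_convergence hgsum (fun m => ?_) ?_
  · have := (SOM_tendsto ha (q*m)).const_mul (R^m / (m.factorial : ℝ))
    simpa using this
  · filter_upwards [eventually_ge_atTop 1] with n hn m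
    have h1 : (0:ℝ) ≤ R^m / (m.factorial : ℝ) * |SOM a n (q*m) - a^(q*m)| := by positivity
    rw [Real.norm_eq_abs, abs_of_nonneg h1]
    exact mul_le_mul_of_nonneg_left (SOM_abs_le ha hn (q*m)) (by positivity)

theorem superoscillation_convergence_odd_power
    (hbar : ℝ) (hhbar : 0 < hbar) (d : ℕ) (hd : 1 ≤ d)
    (p : EuclideanSpace ℝ (Fin d)) (a : ℝ) (ha : 1 < a)
    (q : ℕ) (hq : Odd q) (hq0 : 0 < q)
    (Z : ℕ → EuclideanSpace ℝ (Fin d) → ℂ)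
    (hZ : ∀ (n : ℕ) (x : EuclideanSpace ℝ (Fin d)),
      Z n x = ∑ k ∈ Finset.range (n + 1),
        ((n.choose k : ℂ) * (((1 + a) / 2 : ℝ) : ℂ) ^ (n - k)
            * (((1 - a) / 2 : ℝ) : ℂ) ^ k)
          * Complex.exp (((⟪p, x⟫ : ℝ) : ℂ) * (-Complex.I) ^ q
              * (1 - 2 * (k : ℂ) / (n : ℂ)) ^ q / (hbar : ℂ))) :
    (∀ x : EuclideanSpace ℝ (Fin d),
      Filter.Tendsto (fun n : ℕ => Z n x) Filter.atTop
        (nhds (Complex.exp (((⟪p, x⟫ : ℝ) : ℂ)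
          * (-Complex.I * (a : ℂ)) ^ q / (hbar : ℂ)))))
    ∧ ∀ K : Set (EuclideanSpace ℝ (Fin d)), IsCompact K →
        TendstoUniformlyOn (fun n x => Z n x)
          (fun x => Complex.exp (((⟪p, x⟫ : ℝ) : ℂ)
            * (-Complex.I * (a : ℂ)) ^ q / (hbar : ℂ)))
          Filter.atTop K := by
  have ha1 : (1:ℝ) ≤ a := ha.le
  -- the "frequency" map
  set z : EuclideanSpace ℝ (Fin d) → ℂ :=
    fun x => ((⟪p, x⟫ : ℝ) : ℂ) * (-Complex.I) ^ q / (hbar : ℂ) with hzdef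
  have hzcont : Continuous z := by
    apply Continuous.div_const
    apply Continuous.mul ?_ continuous_const
    exact Complex.continuous_ofReal.comp (continuous_const.inner continuous_id)
  have hZn : ∀ (n : ℕ) (x : EuclideanSpace ℝ (Fin d)),
      Z n x = ∑ k ∈ Finset.range (n + 1),
        ((n.choose k : ℂ) * (((1 + a) / 2 : ℝ) : ℂ) ^ (n - k)
            * (((1 - a) / 2 : ℝ) : ℂ) ^ k)
          * Complex.exp (z x * (1 - 2 * (k : ℂ) / (n : ℂ)) ^ q) := by
    intro n x
    rw [hZ]
    refine Finset.sum_congr rfl fun k _ => ?_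
    congr 1
    rw [hzdef]
    ring
  have hgx : ∀ x : EuclideanSpace ℝ (Fin d),
      Complex.exp (((⟪p, x⟫ : ℝ) : ℂ) * (-Complex.I * (a : ℂ)) ^ q / (hbar : ℂ))
        = Complex.exp (z x * (a:ℂ)^q) := by
    intro x
    congr 1
    rw [hzdef, mul_pow]
    ring
  have main : ∀ K : Set (EuclideanSpace ℝ (Fin d)), IsCompact K →
      TendstoUniformlyOn (fun n x => Z n x)
        (fun x => Complex.exp (((⟪p, x⟫ : ℝ) : ℂ)
          * (-Complex.I * (a : ℂ)) ^ q / (hbar : ℂ))) Filter.atTop K := by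
    intro K hK
    obtain ⟨R0, hR0⟩ := hK.exists_bound_of_continuousOn hzcont.continuousOn
    set R : ℝ := max R0 0 with hRdef
    have hR : (0:ℝ) ≤ R := le_max_right _ _
    rw [Metric.tendstoUniformlyOn_iff]
    intro ε hε
    have hD := SO_D_tendsto ha1 q hR
    filter_upwards [hD.eventually_lt_const hε, eventually_ge_atTop 1] with n hDn hn1
    intro x hx
    rw [dist_comm, dist_eq_norm, hgx x, hZn n x]
    refine lt_of_le_of_lt ?_ hDn
    refine SO_norm_bound ha1 q hn1 (z x) R ?_
    exact (hR0 x hx).trans (le_max_left _ _)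
  refine ⟨fun x => ?_, main⟩
  have := (main {x} isCompact_singleton).tendsto_at (Set.mem_singleton x)
  simpa using this
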